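/- The polar cone of K = { y ∈ ℝ^n : A y ≥ 0 } equals { −Aᵀ λ : λ ∈ ℝ^m, λ ≥ 0 }, i.e., the set of nonnegative combinations of the negated rows of A. -/

import Mathlib

open Finset RealInnerProductSpace

section Auxiliary


/-- Conic Carathéodory: any nonnegative combination can be rewritten so that the
vectors with nonzero coefficient are linearly independent. -/
lemma cone_caratheodory {E : Type*} [AddCommGroup E] [Module ℝ E] {m : ℕ}
    (w : Fin m → E) :
    ∀ N : ℕ, ∀ lam : Fin m → ℝ, (univ.filter fun i => lam i ≠ 0).card ≤ N →
      (∀ i, 0 ≤ lam i) →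
      ∃ mu : Fin m → ℝ, (∀ i, 0 ≤ mu i) ∧ (∑ i, mu i • w i) = (∑ i, lam i • w i) ∧
        LinearIndependent ℝ (fun i : {i // mu i ≠ 0} => w i) := by
  classical
  intro N
  induction N with
  | zero =>
    intro lam hcard hpos
    refine ⟨lam, hpos, rfl, ?_⟩
    have hemp : ∀ i, lam i ≠ 0 → False := by
      intro i hi
      have : i ∈ univ.filter fun i => lam i ≠ 0 := by simp [hi]
      have := card_pos.mpr ⟨i, this⟩
      omega
    have : IsEmpty {i // lam i ≠ 0} := ⟨fun i => hemp i i.2⟩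
    exact linearIndependent_empty_type
  | succ N ih =>
    intro lam hcard hpos
    by_cases hli : LinearIndependent ℝ (fun i : {i // lam i ≠ 0} => w i)
    · exact ⟨lam, hpos, rfl, hli⟩
    · -- get a vanishing combination supported in the support of `lam`
      obtain ⟨g, hg0, i₁, hi₁⟩ := Fintype.not_linearIndependent_iff.mp hli
      set c : Fin m → ℝ := fun i => if h : lam i ≠ 0 then g ⟨i, h⟩ else 0 with hc
      have hgc : ∀ i : {i // lam i ≠ 0}, g i = c ↑i := fun i => by simp [hc, i.2]
      have hcsum : (∑ i, c i • w i) = 0 := by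
        calc (∑ i, c i • w i)
            = ∑ i ∈ univ.filter (fun i => lam i ≠ 0), c i • w i := by
              refine (Finset.sum_filter_of_ne ?_).symm
              intro x _ hx
              by_contra hl
              simp [hc, hl] at hx
          _ = ∑ i : {i // lam i ≠ 0}, c ↑i • w ↑i :=
              Finset.sum_subtype _ (by simp) _
          _ = ∑ i : {i // lam i ≠ 0}, g i • w ↑i := by simp [hgc]
          _ = 0 := hg0
      have hcsupp : ∀ i, c i ≠ 0 → lam i ≠ 0 := by
        intro i hi
        by_contra h
        exact hi (by simp [hc, h])
      have hcne : ∃ i, c i ≠ 0 := ⟨i₁, by simp [hc, i₁.2, hi₁]⟩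
      -- WLOG some coefficient is positive
      obtain ⟨d, hdsum, hdsupp, i₂, hi₂⟩ :
          ∃ d : Fin m → ℝ, (∑ i, d i • w i) = 0 ∧ (∀ i, d i ≠ 0 → lam i ≠ 0) ∧
            ∃ i, 0 < d i := by
        by_cases hp : ∃ i, 0 < c i
        · exact ⟨c, hcsum, hcsupp, hp⟩
        · rw [not_exists] at hp
          replace hp : ∀ i, c i ≤ 0 := fun i => le_of_not_gt (hp i)
          obtain ⟨i, hi⟩ := hcne
          refine ⟨-c, by simp [hcsum], fun i hi => hcsupp i (by simpa using hi), i, ?_⟩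
          have := hp i
          simp only [Pi.neg_apply]
          cases lt_or_eq_of_le this with
          | inl h => linarith
          | inr h => exact absurd h hi
      -- pick the index minimizing `lam i / d i` among positive `d i`
      obtain ⟨i₀, hi₀mem, hi₀min⟩ :=
        Finset.exists_min_image (univ.filter fun i => 0 < d i) (fun i => lam i / d i)
          ⟨i₂, by simp [hi₂]⟩
      have hdi₀ : 0 < d i₀ := by simpa using hi₀mem
      set t : ℝ := lam i₀ / d i₀ with ht
      have ht0 : 0 ≤ t := div_nonneg (hpos i₀) hdi₀.le
      set lam' : Fin m → ℝ := fun i => lam i - t * d i with hlam'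
      have hpos' : ∀ i, 0 ≤ lam' i := by
        intro i
        by_cases h : 0 < d i
        · have hmin := hi₀min i (by simp [h])
          have h1 : lam i₀ * d i ≤ lam i * d i₀ := (div_le_div_iff₀ hdi₀ h).mp hmin
          have h2 : t * d i ≤ lam i := by
            rw [ht, div_mul_eq_mul_div, div_le_iff₀ hdi₀]
            linarith
          simp only [hlam']; linarith
        · have h' : d i ≤ 0 := le_of_not_gt h
          have h1 : t * d i ≤ 0 := mul_nonpos_of_nonneg_of_nonpos ht0 h'
          have h2 := hpos i
          simp only [hlam']; linarith
      have hsum' : (∑ i, lam' i • w i) = (∑ i, lam i • w i) := by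
        simp only [hlam', sub_smul, Finset.sum_sub_distrib, mul_smul]
        rw [← Finset.smul_sum, hdsum, smul_zero, sub_zero]
      have hsupp' : ∀ i, lam' i ≠ 0 → lam i ≠ 0 := by
        intro i hi
        by_contra h
        have hd : d i = 0 := by
          by_contra hd; exact (hdsupp i hd) h
        simp [hlam', h, hd] at hi
      have hi₀' : lam' i₀ = 0 := by
        simp [hlam', ht, div_mul_cancel₀ _ hdi₀.ne']
      have hi₀lam : lam i₀ ≠ 0 := hdsupp i₀ hdi₀.ne'
      have hcard' : (univ.filter fun i => lam' i ≠ 0).card ≤ N := by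
        have hss : (univ.filter fun i => lam' i ≠ 0) ⊂ (univ.filter fun i => lam i ≠ 0) := by
          refine ⟨fun i hi => ?_, fun h => ?_⟩
          · simp only [mem_filter, mem_univ, true_and] at hi ⊢
            exact hsupp' i hi
          · have := h (by simp [hi₀lam] : i₀ ∈ univ.filter fun i => lam i ≠ 0)
            simp [hi₀'] at this
        have := Finset.card_lt_card hss
        omega
      obtain ⟨mu, h1, h2, h3⟩ := ih lam' hcard' hpos'
      exact ⟨mu, h1, h2.trans hsum', h3⟩


lemma cone_caratheodory' {E : Type*} [AddCommGroup E] [Module ℝ E] {m : ℕ}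
    (w : Fin m → E) (lam : Fin m → ℝ) (hpos : ∀ i, 0 ≤ lam i) :
    ∃ mu : Fin m → ℝ, (∀ i, 0 ≤ mu i) ∧ (∑ i, mu i • w i) = (∑ i, lam i • w i) ∧
      LinearIndependent ℝ (fun i : {i // mu i ≠ 0} => w i) := by
  classical
  exact cone_caratheodory w (univ.filter fun i => lam i ≠ 0).card lam le_rfl hpos

section
variable {E : Type*} [NormedAddCommGroup E] [NormedSpace ℝ E] {m : ℕ}

/-- The cone generated by a linearly independent finite family restricted to a finset,
as an image of the positive orthant. -/
lemma isClosed_cone_of_linearIndependent (w : Fin m → E) (s : Finset (Fin m))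
    (hli : LinearIndependent ℝ (fun i : {i // i ∈ s} => w i)) :
    IsClosed {x : E | ∃ lam : Fin m → ℝ, (∀ i, 0 ≤ lam i) ∧ (∀ i ∉ s, lam i = 0) ∧
      x = ∑ i, lam i • w i} := by
  classical
  set T : ({i // i ∈ s} → ℝ) →ₗ[ℝ] E :=
    { toFun := fun mu => ∑ i : {i // i ∈ s}, mu i • w ↑i
      map_add' := by
        intro a b
        simp [add_smul, Finset.sum_add_distrib]
      map_smul' := by
        intro r a
        simp [mul_smul, Finset.smul_sum] } with hT
  have hker : LinearMap.ker T = ⊥ := by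
    rw [LinearMap.ker_eq_bot']
    intro g hg
    have := Fintype.linearIndependent_iff.mp hli g hg
    funext i
    exact this i
  have hemb := LinearMap.isClosedEmbedding_of_injective hker
  have hP : IsClosed {mu : {i // i ∈ s} → ℝ | ∀ i, 0 ≤ mu i} := by
    have : {mu : {i // i ∈ s} → ℝ | ∀ i, 0 ≤ mu i} =
        ⋂ i, {mu : {i // i ∈ s} → ℝ | 0 ≤ mu i} := by
      ext mu; simp
    rw [this]
    exact isClosed_iInter fun i => isClosed_le continuous_const (continuous_apply i)
  have himg : {x : E | ∃ lam : Fin m → ℝ, (∀ i, 0 ≤ lam i) ∧ (∀ i ∉ s, lam i = 0) ∧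
      x = ∑ i, lam i • w i} = T '' {mu | ∀ i, 0 ≤ mu i} := by
    ext x
    constructor
    · rintro ⟨lam, hpos, hz, rfl⟩
      refine ⟨fun i => lam ↑i, fun i => hpos ↑i, ?_⟩
      show (∑ i : {i // i ∈ s}, lam ↑i • w ↑i) = ∑ i, lam i • w i
      rw [Finset.sum_coe_sort s (fun i => lam i • w i)]
      exact Finset.sum_subset (Finset.subset_univ s) fun i _ hi => by
        rw [hz i hi, zero_smul]
    · rintro ⟨mu, hmu, rfl⟩
      refine ⟨fun i => if h : i ∈ s then mu ⟨i, h⟩ else 0, ?_, ?_, ?_⟩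
      · intro i
        by_cases h : i ∈ s
        · simpa [h] using hmu ⟨i, h⟩
        · simp [h]
      · intro i hi; simp [hi]
      · show (∑ i : {i // i ∈ s}, mu i • w ↑i) =
            ∑ i, (if h : i ∈ s then mu ⟨i, h⟩ else 0) • w i
        rw [← Finset.sum_subset (Finset.subset_univ s)
          (fun i _ hi => by simp [hi] : ∀ i ∈ univ, i ∉ s →
            (if h : i ∈ s then mu ⟨i, h⟩ else 0) • w i = 0)]
        rw [← Finset.sum_coe_sort s (fun i => (if h : i ∈ s then mu ⟨i, h⟩ else 0) • w i)]
        refine Finset.sum_congr rfl fun i _ => ?_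
        simp [i.2]
  rw [himg]
  exact hemb.isClosedMap _ hP


/-- A finitely generated cone is closed. -/
lemma isClosed_generated_cone (w : Fin m → E) :
    IsClosed {x : E | ∃ lam : Fin m → ℝ, (∀ i, 0 ≤ lam i) ∧ x = ∑ i, lam i • w i} := by
  classical
  have hunion : {x : E | ∃ lam : Fin m → ℝ, (∀ i, 0 ≤ lam i) ∧ x = ∑ i, lam i • w i} =
      ⋃ s ∈ {s : Finset (Fin m) |
          LinearIndependent ℝ (fun i : {i // i ∈ s} => w i)},
        {x : E | ∃ lam : Fin m → ℝ, (∀ i, 0 ≤ lam i) ∧ (∀ i ∉ s, lam i = 0) ∧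
          x = ∑ i, lam i • w i} := by
    ext x
    simp only [Set.mem_setOf_eq, Set.mem_iUnion]
    constructor
    · rintro ⟨lam, hpos, rfl⟩
      obtain ⟨mu, hmupos, hmusum, hmuli⟩ := cone_caratheodory' w lam hpos
      set s : Finset (Fin m) := univ.filter fun i => mu i ≠ 0 with hs
      have hmem : ∀ i : {i // i ∈ s}, mu ↑i ≠ 0 := fun i => by
        exact (mem_filter.mp i.2).2
      have hli : LinearIndependent ℝ (fun i : {i // i ∈ s} => w ↑i) := by
        have hinj : Function.Injective
            (fun i : {i // i ∈ s} => (⟨↑i, hmem i⟩ : {i // mu i ≠ 0})) := by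
          intro a b hab
          simp only [Subtype.mk.injEq] at hab
          exact Subtype.ext hab
        exact hmuli.comp _ hinj
      refine ⟨s, hli, mu, hmupos, ?_, hmusum.symm⟩
      intro i hi
      by_contra h
      exact hi (by simp [hs, h])
    · rintro ⟨s, _, lam, hpos, _, rfl⟩
      exact ⟨lam, hpos, rfl⟩
  rw [hunion]
  exact Set.Finite.isClosed_biUnion (Set.toFinite _) fun s hs =>
    isClosed_cone_of_linearIndependent w s hs

end

/-- The inner dual cone of a set (replacement for the removed Mathlib definition). -/
noncomputable def Set.innerDualCone {E : Type*} [NormedAddCommGroup E] [InnerProductSpace ℝ E]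
    [CompleteSpace E] (s : Set E) : Set E :=
  {y | ∀ x, x ∈ s → 0 ≤ ⟪x, y⟫}

lemma mem_innerDualCone {E : Type*} [NormedAddCommGroup E] [InnerProductSpace ℝ E]
    [CompleteSpace E] (y : E) (s : Set E) :
    y ∈ s.innerDualCone ↔ ∀ x ∈ s, 0 ≤ ⟪x, y⟫ := by
  rfl

lemma ConvexCone.innerDualCone_of_innerDualCone_eq_self {E : Type*} [NormedAddCommGroup E]
    [InnerProductSpace ℝ E] [CompleteSpace E] (K : ConvexCone ℝ E)
    (ne : (K : Set E).Nonempty) (hc : IsClosed (K : Set E)) :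
    (K : Set E).innerDualCone.innerDualCone = K := by
  lift K to ProperCone ℝ E using ⟨ne, hc⟩
  have := ProperCone.innerDual_innerDual K
  have h2 : ∀ s : Set E, s.innerDualCone = (ProperCone.innerDual s : Set E) := by
    intro s; ext y; simp [Set.innerDualCone]
  rw [h2, h2]
  exact congrArg (fun C : ProperCone ℝ E => (C : Set E)) this

end Auxiliary

/-- The polar cone of `K = {y : A y ≥ 0}` consists exactly of the nonnegative
combinations of the negated rows of `A`. -/
theorem polar_cone_of_polyhedral_cone (m n : ℕ) (A : Matrix (Fin m) (Fin n) ℝ) :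
    {v : EuclideanSpace ℝ (Fin n) |
        ∀ z : EuclideanSpace ℝ (Fin n), (∀ j, 0 ≤ A.mulVec z j) → ⟪v, z⟫ ≤ 0} =
      {v : EuclideanSpace ℝ (Fin n) |
        ∃ lam : Fin m → ℝ, (∀ j, 0 ≤ lam j) ∧ v = -(A.transpose.mulVec lam)} := by
  classical
  set a : Fin m → EuclideanSpace ℝ (Fin n) := fun j => WithLp.toLp 2 (fun k => A j k : Fin n → ℝ) with ha
  -- the cone generated by the rows of `A`
  set C : ConvexCone ℝ (EuclideanSpace ℝ (Fin n)) :=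
    { carrier := {x : EuclideanSpace ℝ (Fin n) | ∃ lam : Fin m → ℝ, (∀ j, 0 ≤ lam j) ∧ x = ∑ j, lam j • a j}
      smul_mem' := by
        rintro c hc x ⟨lam, hpos, rfl⟩
        refine ⟨fun j => c * lam j, fun j => mul_nonneg hc.le (hpos j), ?_⟩
        rw [Finset.smul_sum]
        exact Finset.sum_congr rfl fun j _ => by simp [smul_smul]
      add_mem' := by
        rintro x ⟨lam, hlam, rfl⟩ y ⟨mu, hmu, rfl⟩
        refine ⟨fun j => lam j + mu j, fun j => add_nonneg (hlam j) (hmu j), ?_⟩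
        rw [← Finset.sum_add_distrib]
        exact Finset.sum_congr rfl fun j _ => by simp [add_smul] } with hC
  have hne : (C : Set (EuclideanSpace ℝ (Fin n))).Nonempty := ⟨0, 0, fun j => le_refl 0, by simp⟩
  have hcl : IsClosed (C : Set (EuclideanSpace ℝ (Fin n))) := isClosed_generated_cone a
  have hdd := ConvexCone.innerDualCone_of_innerDualCone_eq_self C hne hcl
  -- the inner products
  have hinner : ∀ (j : Fin m) (z : EuclideanSpace ℝ (Fin n)), ⟪a j, z⟫ = A.mulVec z j := by
    intro j z
    simp [ha, PiLp.inner_apply, RCLike.inner_apply, conj_trivial, Matrix.mulVec,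
      dotProduct, mul_comm]
  have hrowmem : ∀ j, a j ∈ C := by
    intro j
    refine ⟨fun i => if i = j then 1 else 0, fun i => by positivity, ?_⟩
    simp
  -- `K` is the dual cone of `C`
  have hK : ∀ z : EuclideanSpace ℝ (Fin n), (∀ j, 0 ≤ A.mulVec z j) ↔ z ∈ (C : Set (EuclideanSpace ℝ (Fin n))).innerDualCone := by
    intro z
    constructor
    · intro hz
      rw [mem_innerDualCone]
      rintro x ⟨lam, hpos, rfl⟩
      rw [sum_inner]
      refine Finset.sum_nonneg fun j _ => ?_
      rw [real_inner_smul_left, hinner]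
      exact mul_nonneg (hpos j) (hz j)
    · intro hz j
      rw [← hinner]
      exact hz (a j) (hrowmem j)
  -- translating the matrix-vector product
  have key : ∀ lam : Fin m → ℝ,
      (∑ j, lam j • a j) = (A.transpose.mulVec lam : Fin n → ℝ) := by
    intro lam
    funext k
    have hproj : EuclideanSpace.proj k (∑ j, lam j • a j) = ∑ j, lam j * A j k := by
      rw [map_sum]
      exact Finset.sum_congr rfl fun j _ => by simp [ha]
    have : (∑ j, lam j • a j) k = ∑ j, lam j * A j k := hproj
    rw [this]
    simp [Matrix.mulVec, dotProduct, Matrix.transpose_apply, mul_comm]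
  ext v
  simp only [Set.mem_setOf_eq]
  constructor
  · intro hv
    have hmem : -v ∈ ((C : Set (EuclideanSpace ℝ (Fin n))).innerDualCone : Set (EuclideanSpace ℝ (Fin n))).innerDualCone := by
      rw [mem_innerDualCone]
      intro z hz
      have := hv z ((hK z).mpr hz)
      rw [inner_neg_right, real_inner_comm]
      linarith
    rw [hdd] at hmem
    obtain ⟨lam, hpos, hsum⟩ := hmem
    refine ⟨lam, hpos, ?_⟩
    have := key lam
    rw [← this, ← hsum]
    simp
  · rintro ⟨lam, hpos, hv⟩ z hz
    obtain rfl : v = WithLp.toLp 2 (-(A.transpose.mulVec lam)) := by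
      rw [← hv]
    have hzd := (hK z).mp hz
    have : (0:ℝ) ≤ ⟪(∑ j, lam j • a j : EuclideanSpace ℝ (Fin n)), z⟫ := hzd _ ⟨lam, hpos, rfl⟩
    rw [← WithLp.toLp_ofLp (p := 2) (∑ j, lam j • a j), key lam] at this
    rw [WithLp.toLp_neg, inner_neg_left]
    linarith
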